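/- Let G be a topological group acting continuously on a connected topological space X satisfying property (a): for every x ∈ X and every open neighborhood O of the identity, there exists y ∈ X with x ∈ interior(closure(O·y)). Then for every x ∈ X with interior(closure(G·x)) ≠ ∅, the orbit G·x is dense in X, i.e. closure(G·x) = X. -/

import Mathlib

theorem stmt14 {G X : Type*} [Group G] [TopologicalSpace G] [IsTopologicalGroup G]
    [TopologicalSpace X] [ConnectedSpace X] [MulAction G X] [ContinuousSMul G X]
    (ha : ∀ (x : X) (O : Set G), IsOpen O → (1 : G) ∈ O →
      ∃ y : X, x ∈ interior (closure ((fun g => g • y) '' O)))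
    (x : X) (hne : interior (closure (MulAction.orbit G x)) ≠ ∅) :
    closure (MulAction.orbit G x) = Set.univ := by
  set C := closure (MulAction.orbit G x) with hC
  set U := interior C with hU
  -- C is G-invariant
  have hCinv : ∀ (g : G) (z : X), z ∈ C → g • z ∈ C := by
    intro g z hz
    have hmap : Set.MapsTo (fun w => g • w) (MulAction.orbit G x) (MulAction.orbit G x) := by
      rintro _ ⟨h, rfl⟩
      exact ⟨g * h, by simp [mul_smul]⟩
    exact hmap.closure (continuous_const_smul g) hz
  -- U is G-invariant (in the reverse direction we need)
  have hUinv : ∀ (g : G) (z : X), g • z ∈ U → z ∈ U := by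
    intro g z hz
    have h1 : z ∈ (Homeomorph.smul g⁻¹ : X ≃ₜ X) '' U := by
      refine ⟨g • z, hz, ?_⟩
      simp [Homeomorph.smul, inv_smul_smul]
    rw [Homeomorph.image_interior] at h1
    have h2 : (Homeomorph.smul g⁻¹ : X ≃ₜ X) '' C ⊆ C := by
      rintro _ ⟨w, hw, rfl⟩
      exact hCinv g⁻¹ w hw
    exact interior_mono h2 h1
  -- U is clopen
  have hclopen : IsClopen U := by
    refine ⟨?_, isOpen_interior⟩
    rw [← closure_subset_iff_isClosed]
    intro z hz
    obtain ⟨y, hy⟩ := ha z Set.univ isOpen_univ trivial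
    rw [Set.image_univ] at hy
    have horb : (Set.range fun g : G => g • y) = MulAction.orbit G y := rfl
    rw [horb] at hy
    -- the open set interior (closure (orbit G y)) meets U
    have hmeet : (interior (closure (MulAction.orbit G y)) ∩ U).Nonempty := by
      have := mem_closure_iff.mp hz _ isOpen_interior hy
      exact this
    obtain ⟨w, hw1, hw2⟩ := hmeet
    -- orbit G y meets U
    have hmeet2 : (U ∩ MulAction.orbit G y).Nonempty :=
      mem_closure_iff.mp (interior_subset hw1) _ isOpen_interior hw2
    obtain ⟨_, hv1, g, rfl⟩ := hmeet2
    have hyU : y ∈ U := hUinv g y hv1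
    have hsub : MulAction.orbit G y ⊆ C := by
      rintro _ ⟨h, rfl⟩
      exact hCinv h y (interior_subset hyU)
    have : closure (MulAction.orbit G y) ⊆ C := closure_minimal hsub isClosed_closure
    exact interior_mono this hy
  have hUuniv : U = Set.univ := hclopen.eq_univ (Set.nonempty_iff_ne_empty.mpr hne)
  apply Set.eq_univ_of_univ_subset
  rw [← hUuniv]
  exact interior_subset
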